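/- Let P : ℝⁿ → ℝᵐ be differentiable on a convex set C with derivative L-Lipschitz on C in the operator norm (‖P'(x) − P'(x')‖ ≤ L‖x − x'‖ for x, x' ∈ C). Let x ∈ C, z ∈ ℝⁿ and α ∈ ℝ be such that x − αz ∈ C and P'(x) z = P(x). Then ‖P(x − αz)‖ ≤ |1 − α|·‖P(x)‖ + (L/2)·α²·‖z‖². -/

import Mathlib

/-- the basic one-step inequality for a damped Newton step on a convex set. -/
theorem stmt6 {n m : ℕ} (L : ℝ) (hL : 0 < L)
    (C : Set (EuclideanSpace ℝ (Fin n))) (hC : Convex ℝ C)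
    (P : EuclideanSpace ℝ (Fin n) → EuclideanSpace ℝ (Fin m))
    (P' : EuclideanSpace ℝ (Fin n) →
      (EuclideanSpace ℝ (Fin n) →L[ℝ] EuclideanSpace ℝ (Fin m)))
    (hdiff : ∀ x ∈ C, HasFDerivWithinAt P (P' x) C x)
    (hLip : ∀ x ∈ C, ∀ x' ∈ C, ‖P' x - P' x'‖ ≤ L * ‖x - x'‖)
    (x : EuclideanSpace ℝ (Fin n)) (hx : x ∈ C)
    (z : EuclideanSpace ℝ (Fin n)) (α : ℝ)
    (hxz : x - α • z ∈ C) (hz : P' x z = P x) :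
    ‖P (x - α • z)‖ ≤ |1 - α| * ‖P x‖ + L / 2 * α ^ 2 * ‖z‖ ^ 2 := by
  set v : EuclideanSpace ℝ (Fin n) := -(α • z) with hv
  have hxv : x + v = x - α • z := by simp [hv, sub_eq_add_neg]
  set c : ℝ → EuclideanSpace ℝ (Fin n) := fun t => x + t • v with hc
  have hmem : ∀ t ∈ Set.Icc (0:ℝ) 1, c t ∈ C := by
    intro t ht
    have : c t = (1 - t) • x + t • (x + v) := by
      simp [hc]; module
    rw [this]
    exact hC hx (hxv ▸ hxz) (by linarith [ht.2]) ht.1 (by ring)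
  set g : ℝ → EuclideanSpace ℝ (Fin m) :=
    fun t => P (c t) - P x - t • (P' x v) with hg
  have hcderiv : ∀ t : ℝ, HasDerivAt c v t := by
    intro t
    have h := ((hasDerivAt_id t).smul_const v).const_add x
    simp only [one_smul] at h
    exact h
  have hgderiv : ∀ t ∈ Set.Ico (0:ℝ) 1,
      HasDerivWithinAt g ((P' (c t) - P' x) v) (Set.Ici t) t := by
    intro t ht
    have h1 : HasDerivWithinAt (fun t => P (c t)) (P' (c t) v) (Set.Icc 0 1) t := by
      have := (hdiff (c t) (hmem t ⟨ht.1, ht.2.le⟩)).comp_hasDerivWithinAt t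
        ((hcderiv t).hasDerivWithinAt) hmem
      exact this
    have h2 : HasDerivWithinAt g (P' (c t) v - P' x v) (Set.Icc 0 1) t := by
      have h := (h1.sub_const (P x)).sub
        ((hasDerivWithinAt_id t _).smul_const (P' x v))
      simp only [one_smul] at h
      exact h
    have h3 : HasDerivWithinAt g (P' (c t) v - P' x v) (Set.Ici t) t :=
      h2.mono_of_mem_nhdsWithin (Icc_mem_nhdsGE_of_mem ⟨ht.1, ht.2⟩)
    simpa using h3
  have hPc : ContinuousOn (fun t => P (c t)) (Set.Icc 0 1) := by
    intro t ht
    exact ((hdiff _ (hmem t ht)).continuousWithinAt.comp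
      ((hcderiv t).continuousAt.continuousWithinAt) hmem)
  have key : ∀ t ∈ Set.Icc (0:ℝ) 1, ‖g t‖ ≤ L * ‖v‖ ^ 2 / 2 * t ^ 2 := by
    refine image_norm_le_of_norm_deriv_right_le_deriv_boundary
      (f' := fun t => (P' (c t) - P' x) v)
      (B := fun t => L * ‖v‖ ^ 2 / 2 * t ^ 2) (B' := fun t => L * ‖v‖ ^ 2 * t)
      ?_ hgderiv ?_ ?_ ?_
    · exact ((hPc.sub continuousOn_const).sub
        ((continuousOn_id.smul continuousOn_const)))
    · simp [hg, hc]
    · intro t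
      have : HasDerivAt (fun t : ℝ => L * ‖v‖ ^ 2 / 2 * t ^ 2)
          (L * ‖v‖ ^ 2 / 2 * (↑2 * t ^ 1)) t := (hasDerivAt_pow 2 t).const_mul _
      convert this using 1; push_cast; ring
    · intro t ht
      obtain ⟨ht0, ht1⟩ := ht
      calc ‖(P' (c t) - P' x) v‖ ≤ ‖P' (c t) - P' x‖ * ‖v‖ :=
            (P' (c t) - P' x).le_opNorm v
        _ ≤ (L * ‖c t - x‖) * ‖v‖ := by
            apply mul_le_mul_of_nonneg_right _ (norm_nonneg v)
            exact hLip (c t) (hmem t ⟨ht0, ht1.le⟩) x hx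
        _ = L * ‖v‖ ^ 2 * t := by
            have : c t - x = t • v := by simp [hc]
            rw [this, norm_smul, Real.norm_eq_abs, abs_of_nonneg ht0]; ring
  have hg1 : g 1 = P (x - α • z) - (1 - α) • P x := by
    have hPv : P' x v = -α • P x := by
      rw [hv]; simp [map_smul, hz]
    simp [hg, hc, hxv, hPv]
    module
  have h1 := key 1 ⟨zero_le_one, le_refl 1⟩
  rw [hg1] at h1
  have hvnorm : ‖v‖ ^ 2 = α ^ 2 * ‖z‖ ^ 2 := by
    rw [hv, norm_neg, norm_smul, mul_pow, Real.norm_eq_abs, sq_abs]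
  calc ‖P (x - α • z)‖
      = ‖(P (x - α • z) - (1 - α) • P x) + (1 - α) • P x‖ := by rw [sub_add_cancel]
    _ ≤ ‖P (x - α • z) - (1 - α) • P x‖ + ‖(1 - α) • P x‖ := norm_add_le _ _
    _ ≤ L * ‖v‖ ^ 2 / 2 * 1 ^ 2 + |1 - α| * ‖P x‖ := by
        gcongr
        rw [norm_smul, Real.norm_eq_abs]
    _ = |1 - α| * ‖P x‖ + L / 2 * α ^ 2 * ‖z‖ ^ 2 := by
        rw [hvnorm]; ring
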